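/- arXiv:2205.14196 — 2 statements merged into one kernel-verified Lean document; each statement's English description precedes it below -/
import Mathlib

section
/- For fixed k ≥ 1 and fixed α with 0 < α < 1, the Berk–Jones statistic φ_BJ(α, k, n) = n · KL(k/n, α) is monotonically nonincreasing in n for n in the range k ≤ n ≤ k/α (i.e., while k/n ≥ α), where KL is the truncated binary KL divergence. -/
/-- Truncated binary KL divergence. -/
noncomputable def KLdiv (a b : ℝ) : ℝ :=
  if b ≤ a then a * Real.log (a / b) + (1 - a) * Real.log ((1 - a) / (1 - b)) else 0

/-- Berk–Jones statistic. -/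
noncomputable def phiBJ (α k n : ℝ) : ℝ := n * KLdiv (k / n) α

/-- Smooth version of the Berk–Jones statistic. -/
noncomputable def gBJ (α k n : ℝ) : ℝ :=
  k * Real.log k - k * Real.log n - k * Real.log α
    + (n - k) * Real.log (n - k) - (n - k) * Real.log n - (n - k) * Real.log (1 - α)

lemma phiBJ_eq_gBJ (α k n : ℝ) (hα : 0 < α) (hα1 : α < 1) (hk : 1 ≤ k)
    (h₁ : k ≤ n) (h₂ : n ≤ k / α) : phiBJ α k n = gBJ α k n := by
  have hk0 : (0:ℝ) < k := lt_of_lt_of_le one_pos hk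
  have hn0 : (0:ℝ) < n := lt_of_lt_of_le hk0 h₁
  have hna : n * α ≤ k := by
    rw [← le_div_iff₀ hα]; exact h₂
  have hif : α ≤ k / n := (le_div_iff₀ hn0).2 (by linarith)
  rw [phiBJ, KLdiv, if_pos hif]
  have h1 : 1 - k / n = (n - k) / n := by field_simp
  rcases eq_or_lt_of_le h₁ with heq | hlt
  · subst heq
    simp [gBJ, div_self hn0.ne', Real.log_inv, one_div]
  · have hnk : 0 < n - k := sub_pos.2 hlt
    have h1α : (0:ℝ) < 1 - α := by linarith
    rw [h1, Real.log_div (div_pos hk0 hn0).ne' hα.ne',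
        Real.log_div hk0.ne' hn0.ne',
        Real.log_div (div_pos hnk hn0).ne' h1α.ne',
        Real.log_div hnk.ne' hn0.ne', gBJ]
    field_simp
    ring

lemma gBJ_hasDerivAt (α k n : ℝ) (hn0 : 0 < n) (hnk : k < n) :
    HasDerivAt (gBJ α k)
      (0 - k * n⁻¹ - 0 + (Real.log (n - k) + 1) * 1
        - (1 * Real.log n + (n - k) * n⁻¹) - 1 * Real.log (1 - α)) n := by
  have hsub : HasDerivAt (fun x : ℝ => x - k) 1 n := (hasDerivAt_id n).sub_const k
  have h1 : HasDerivAt (fun x : ℝ => k * Real.log x) (k * n⁻¹) n :=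
    (Real.hasDerivAt_log hn0.ne').const_mul k
  have h2 : HasDerivAt (fun x : ℝ => (x - k) * Real.log (x - k))
      ((Real.log (n - k) + 1) * 1) n :=
    by have := (Real.hasDerivAt_mul_log (sub_ne_zero.2 hnk.ne')).comp n hsub; exact this
  have h3 : HasDerivAt (fun x : ℝ => (x - k) * Real.log x)
      (1 * Real.log n + (n - k) * n⁻¹) n :=
    hsub.mul (Real.hasDerivAt_log hn0.ne')
  have h4 : HasDerivAt (fun x : ℝ => (x - k) * Real.log (1 - α))
      (1 * Real.log (1 - α)) n := hsub.mul_const _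
  have h0 : HasDerivAt (fun _ : ℝ => k * Real.log k) 0 n := hasDerivAt_const n _
  have h0' : HasDerivAt (fun _ : ℝ => k * Real.log α) 0 n := hasDerivAt_const n _
  exact ((((h0.sub h1).sub h0').add h2).sub h3).sub h4

/-- For fixed `k ≥ 1` and `0 < α < 1`, the Berk–Jones statistic is monotonically
nonincreasing in `n` in the range `k ≤ n ≤ k / α`. -/
theorem stmt_5 (α k n₁ n₂ : ℝ) (hα : 0 < α) (hα1 : α < 1) (hk : 1 ≤ k)
    (hn : n₁ ≤ n₂) (h₁ : k ≤ n₁) (h₂ : n₂ ≤ k / α) :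
    phiBJ α k n₂ ≤ phiBJ α k n₁ := by
  have hk0 : (0:ℝ) < k := lt_of_lt_of_le one_pos hk
  have h1α : (0:ℝ) < 1 - α := by linarith
  have key : AntitoneOn (gBJ α k) (Set.Icc k (k / α)) := by
    apply antitoneOn_of_deriv_nonpos (convex_Icc _ _)
    · -- continuity on Icc
      have hpos : ∀ x ∈ Set.Icc k (k / α), x ≠ 0 := fun x hx =>
        (lt_of_lt_of_le hk0 hx.1).ne'
      have hlog : ContinuousOn Real.log (Set.Icc k (k / α)) :=
        Real.continuousOn_log.mono (fun x hx => hpos x hx)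
      have hxlx : Continuous (fun x : ℝ => (x - k) * Real.log (x - k)) :=
        Real.continuous_mul_log.comp (continuous_id.sub continuous_const)
      unfold gBJ
      exact ((((continuousOn_const.sub (continuousOn_const.mul hlog)).sub
        continuousOn_const).add hxlx.continuousOn).sub
        ((continuous_id.sub continuous_const).continuousOn.mul hlog)).sub
        ((continuous_id.sub continuous_const).continuousOn.mul continuousOn_const)
    · intro x hx
      rw [interior_Icc] at hx
      exact (gBJ_hasDerivAt α k x (lt_trans hk0 hx.1) hx.1).differentiableAt.differentiableWithinAt
    · intro x hx
      rw [interior_Icc] at hx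
      have hx0 : (0:ℝ) < x := lt_trans hk0 hx.1
      have hxk : 0 < x - k := sub_pos.2 hx.1
      rw [(gBJ_hasDerivAt α k x hx0 hx.1).deriv]
      have hxa : x * α < k := (lt_div_iff₀ hα).1 hx.2
      have hle : x - k ≤ x * (1 - α) := by nlinarith
      have hlog : Real.log (x - k) ≤ Real.log (x * (1 - α)) :=
        Real.log_le_log hxk hle
      rw [Real.log_mul hx0.ne' h1α.ne'] at hlog
      have hfield : k * x⁻¹ + (x - k) * x⁻¹ = 1 := by field_simp; ring
      linarith
  rw [phiBJ_eq_gBJ α k n₁ hα hα1 hk h₁ (le_trans hn h₂),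
      phiBJ_eq_gBJ α k n₂ hα hα1 hk (le_trans h₁ hn) h₂]
  exact key ⟨h₁, le_trans hn h₂⟩ ⟨le_trans h₁ hn, h₂⟩ hn
end

section
/- Let a_1,...,a_T be real numbers and define p(x) = (#{t : a_t ≥ x})/T for x ∈ ℝ, with T ≥ 1. Then for any α ∈ [0,1], the number of indices j such that p(a_j) ≤ α is at most ⌊αT⌋ + m, where m is the maximum multiplicity of any value among a_1,...,a_T; in particular, if all a_t are distinct, at most ⌊αT⌋ + 1 of the empirical p-values p(a_j) are ≤ α. -/
/-- Super-uniformity of empirical p-values computed from the same sample: the number of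
indices `j` with `p (a j) ≤ α` is at most `⌊α * T⌋` plus the maximum multiplicity of a
value; if all values are distinct, at most `⌊α * T⌋ + 1`. -/
theorem stmt_18 (T : ℕ) (hT : 1 ≤ T) (a : Fin T → ℝ) (α : ℝ) (hα₀ : 0 ≤ α) (hα₁ : α ≤ 1) :
    (((Finset.univ.filter (fun j =>
        ((Finset.univ.filter (fun t => a t ≥ a j)).card : ℝ) / T ≤ α)).card : ℤ) ≤
      ⌊α * T⌋ + ((Finset.univ.sup (fun t : Fin T =>
        (Finset.univ.filter (fun s => a s = a t)).card) : ℕ) : ℤ)) ∧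
    (Function.Injective a →
      (((Finset.univ.filter (fun j =>
        ((Finset.univ.filter (fun t => a t ≥ a j)).card : ℝ) / T ≤ α)).card : ℤ) ≤
      ⌊α * T⌋ + 1)) := by
  set S := Finset.univ.filter (fun j : Fin T =>
        ((Finset.univ.filter (fun t => a t ≥ a j)).card : ℝ) / T ≤ α) with hS
  have hT0 : (0:ℝ) < T := by exact_mod_cast hT
  have key : (S.card : ℤ) ≤ ⌊α * T⌋ := by
    rcases S.eq_empty_or_nonempty with h | h
    · rw [h]
      simp only [Finset.card_empty, Nat.cast_zero]
      exact Int.le_floor.mpr (by push_cast; positivity)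
    · obtain ⟨j0, hj0, hmin⟩ := S.exists_min_image a h
      have hj0' : ((Finset.univ.filter (fun t => a t ≥ a j0)).card : ℝ) / T ≤ α := by
        rw [hS] at hj0
        exact (Finset.mem_filter.mp hj0).2
      have hsub : S ⊆ Finset.univ.filter (fun t => a t ≥ a j0) := by
        intro j hj
        simp only [Finset.mem_filter, Finset.mem_univ, true_and]
        exact hmin j hj
      have h1 : (S.card : ℤ) ≤ ((Finset.univ.filter (fun t => a t ≥ a j0)).card : ℤ) := by
        exact_mod_cast Finset.card_le_card hsub
      have h2 : ((Finset.univ.filter (fun t => a t ≥ a j0)).card : ℝ) ≤ α * T := by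
        rw [div_le_iff₀ hT0] at hj0'; linarith
      exact h1.trans (Int.le_floor.mpr (by exact_mod_cast h2))
  have hm : (0:ℤ) ≤ ((Finset.univ.sup (fun t : Fin T =>
        (Finset.univ.filter (fun s => a s = a t)).card) : ℕ) : ℤ) := Int.ofNat_nonneg _
  exact ⟨by linarith, fun _ => by linarith⟩
end
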